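/- Let α₁,...,α_n be formulas and u_n a monotone valuation on M_n such that a singleton {i} forces α_j iff i = j, and suppose each world of M_n forcing ¬¬(α₁ ∨ ... ∨ α_n). For a nonempty I ⊆ {1,...,n} define α_I := ¬¬⋁_{i∈I} α_i. Then for all nonempty I, J ⊆ {1,...,n}: the world J forces α_I under u_n if and only if J ⊆ I. -/
import Mathlib


inductive Fml : Type where
  | atom : ℕ → Fml
  | bot  : Fml
  | and  : Fml → Fml → Fml
  | or   : Fml → Fml → Fml
  | imp  : Fml → Fml → Fml
deriving DecidableEq

/-- Intuitionistic negation: ¬φ := φ → ⊥. -/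
def Fml.neg (φ : Fml) : Fml := .imp φ .bot

/-- Biconditional. -/
def Fml.iff (φ ψ : Fml) : Fml := .and (.imp φ ψ) (.imp ψ φ)

/-- Disjunction of a list of formulas (empty disjunction is ⊥). -/
def disj : List Fml → Fml
  | [] => .bot
  | [φ] => φ
  | φ :: l => .or φ (disj l)

/-- Conjunction of a list of formulas (empty conjunction is ¬⊥). -/
def conj : List Fml → Fml
  | [] => Fml.neg .bot
  | [φ] => φ
  | φ :: l => .and φ (conj l)

/-- Substitution, extended homomorphically. -/
def Fml.subst (σ : ℕ → Fml) : Fml → Fml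
  | .atom p => σ p
  | .bot => .bot
  | .and φ ψ => .and (φ.subst σ) (ψ.subst σ)
  | .or φ ψ => .or (φ.subst σ) (ψ.subst σ)
  | .imp φ ψ => .imp (φ.subst σ) (ψ.subst σ)

/-- Hilbert-style provability for intuitionistic logic plus extra axioms `Ax`. -/
inductive Prov (Ax : Fml → Prop) : Fml → Prop where
  | ax {φ} : Ax φ → Prov Ax φ
  | k {φ ψ} : Prov Ax (.imp φ (.imp ψ φ))
  | s {φ ψ χ} : Prov Ax (.imp (.imp φ (.imp ψ χ)) (.imp (.imp φ ψ) (.imp φ χ)))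
  | andI {φ ψ} : Prov Ax (.imp φ (.imp ψ (.and φ ψ)))
  | andE₁ {φ ψ} : Prov Ax (.imp (.and φ ψ) φ)
  | andE₂ {φ ψ} : Prov Ax (.imp (.and φ ψ) ψ)
  | orI₁ {φ ψ} : Prov Ax (.imp φ (.or φ ψ))
  | orI₂ {φ ψ} : Prov Ax (.imp ψ (.or φ ψ))
  | orE {φ ψ χ} : Prov Ax (.imp (.imp φ χ) (.imp (.imp ψ χ) (.imp (.or φ ψ) χ)))
  | exfalso {φ} : Prov Ax (.imp .bot φ)
  | mp {φ ψ} : Prov Ax (.imp φ ψ) → Prov Ax φ → Prov Ax ψ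

/-- No extra axioms: pure intuitionistic logic is `Prov NoAx`. -/
def NoAx : Fml → Prop := fun _ => False

/-- Instances of the weak Kreisel–Putnam axiom schema. -/
def wKPAx : Fml → Prop := fun φ =>
  ∃ a b c : Fml, φ = .imp (.imp a.neg (.or b.neg c.neg))
    (.or (.imp a.neg b.neg) (.imp a.neg c.neg))

/-- Intuitionistic Kripke forcing over a preordered set of worlds. -/
def Force {W : Type} [Preorder W] (V : W → ℕ → Prop) : W → Fml → Prop
  | w, .atom p => V w p
  | _, .bot => False
  | w, .and φ ψ => Force V w φ ∧ Force V w ψ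
  | w, .or φ ψ => Force V w φ ∨ Force V w ψ
  | w, .imp φ ψ => ∀ v, w ≤ v → Force V v φ → Force V v ψ

/-- A valuation is monotone (persistent). -/
def MonoVal {W : Type} [Preorder W] (V : W → ℕ → Prop) : Prop :=
  ∀ ⦃w w'⦄, w ≤ w' → ∀ p, V w p → V w' p

/-- The Medvedev frame `M n`: nonempty subsets of `Fin n` ordered by reverse inclusion. -/
def Med (n : ℕ) : Type := {I : Finset (Fin n) // I.Nonempty}

instance {n : ℕ} : PartialOrder (Med n) where
  le I J := J.1 ⊆ I.1
  le_refl I := Finset.Subset.refl _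
  le_trans I J K h h' := Finset.Subset.trans h' h
  le_antisymm I J h h' := Subtype.ext (Finset.Subset.antisymm h' h)

instance {n : ℕ} : DecidableEq (Med n) := Subtype.instDecidableEq

/-- Validity on the Medvedev frame `M n`. -/
def MedValid (n : ℕ) (φ : Fml) : Prop :=
  ∀ V : Med n → ℕ → Prop, MonoVal V → ∀ w, Force V w φ

/-- Medvedev's logic of finite problems. -/
def ML (φ : Fml) : Prop := ∀ n, MedValid n φ

/-- The singleton world `{i}` of `M n`. -/
def single {n : ℕ} (i : Fin n) : Med n := ⟨{i}, Finset.singleton_nonempty i⟩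

/-- Exponentiation on ℕ∞ (anything involving ∞ gives ∞). -/
def epow : ℕ∞ → ℕ∞ → ℕ∞
  | some a, some b => some (a ^ b)
  | _, _ => ⊤

/-- Kreisel–Putnam rank. -/
def rank : Fml → ℕ∞
  | .imp _ .bot => 1
  | .or φ ψ => rank φ + rank ψ
  | .and φ ψ => rank φ * rank ψ
  | .imp φ ψ => epow (rank ψ) (rank φ)
  | _ => ⊤

/-- Disjunction of `α i` over a finite index set. -/
noncomputable def bigOrOn {n : ℕ} (α : Fin n → Fml) (I : Finset (Fin n)) : Fml :=
  disj (I.toList.map α)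

/-- `α_I := ¬¬⋁_{i ∈ I} α_i`. -/
noncomputable def alphaF {n : ℕ} (α : Fin n → Fml) (I : Finset (Fin n)) : Fml :=
  Fml.neg (Fml.neg (bigOrOn α I))


lemma force_mono {W : Type} [Preorder W] {V : W → ℕ → Prop} (hV : MonoVal V) :
    ∀ (φ : Fml) ⦃w w' : W⦄, w ≤ w' → Force V w φ → Force V w' φ
  | .atom p, _, _, h, hf => hV h p hf
  | .bot, _, _, _, hf => hf
  | .and φ ψ, _, _, h, hf => ⟨force_mono hV φ h hf.1, force_mono hV ψ h hf.2⟩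
  | .or φ ψ, _, _, h, hf =>
      hf.elim (fun x => Or.inl (force_mono hV φ h x)) (fun x => Or.inr (force_mono hV ψ h x))
  | .imp _ _, _, _, h, hf => fun v hv => hf v (le_trans h hv)

lemma force_disj {W : Type} [Preorder W] {V : W → ℕ → Prop} (w : W) :
    ∀ l : List Fml, Force V w (disj l) ↔ ∃ φ ∈ l, Force V w φ
  | [] => by simp [disj, Force]
  | [φ] => by simp [disj]
  | φ :: ψ :: l => by
      have h := force_disj (V := V) w (ψ :: l)
      simp only [disj, Force, h, List.mem_cons]
      constructor
      · rintro (h | ⟨χ, hχ, hf⟩)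
        · exact ⟨φ, Or.inl rfl, h⟩
        · exact ⟨χ, Or.inr hχ, hf⟩
      · rintro ⟨χ, (rfl | hχ), hf⟩
        · exact Or.inl hf
        · exact Or.inr ⟨χ, hχ, hf⟩

lemma force_bigOrOn {n : ℕ} {V : Med n → ℕ → Prop} (w : Med n) (α : Fin n → Fml)
    (I : Finset (Fin n)) :
    Force V w (bigOrOn α I) ↔ ∃ i ∈ I, Force V w (α i) := by
  rw [bigOrOn, force_disj]
  constructor
  · rintro ⟨φ, hφ, hf⟩
    obtain ⟨i, hi, rfl⟩ := List.mem_map.1 hφ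
    exact ⟨i, Finset.mem_toList.1 hi, hf⟩
  · rintro ⟨i, hi, hf⟩
    exact ⟨α i, List.mem_map.2 ⟨i, Finset.mem_toList.2 hi, rfl⟩, hf⟩

/-- if under the monotone valuation `u` on `M n` each singleton `{i}`
forces `α_j` iff `i = j`, and every world forces `¬¬(α₁ ∨ ... ∨ α_n)`, then the world
`J` forces `α_I := ¬¬⋁_{i∈I} α_i` iff `J ⊆ I`. -/
theorem stmt11 (n : ℕ) (α : Fin n → Fml) (u : Med n → ℕ → Prop)
    (hu : MonoVal u)
    (hsing : ∀ i j : Fin n, Force u (single i) (α j) ↔ i = j)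
    (hexh : ∀ w : Med n, Force u w (Fml.neg (Fml.neg (disj (List.ofFn α))))) :
    ∀ (I J : Finset (Fin n)) (_ : I.Nonempty) (hJ : J.Nonempty),
      Force u ⟨J, hJ⟩ (alphaF α I) ↔ J ⊆ I := by
  intro I J hI hJ
  constructor
  · intro hF j hjJ
    -- world {j} is above J
    have hle : @LE.le (Med n) Preorder.toLE ⟨J, hJ⟩ (single j) :=
      Finset.singleton_subset_iff.2 hjJ
    -- single j does not force neg(bigOrOn α I) leads to: single j forces bigOrOn
    by_contra hjI
    apply hF (single j) hle
    intro v hv hfv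
    -- v ⊆ {j}, nonempty, so v = single j
    have hv1 : v = single j := by
      apply Subtype.ext
      rcases Finset.subset_singleton_iff.1 hv with h0 | h1
      · exact absurd h0 (Finset.nonempty_iff_ne_empty.1 v.2)
      · exact h1
    subst hv1
    obtain ⟨i, hiI, hfi⟩ := (force_bigOrOn _ α I).1 hfv
    exact hjI (((hsing j i).1 hfi) ▸ hiI)
  · intro hJI v hv hnv
    obtain ⟨j, hjv⟩ := v.2
    have hle : @LE.le (Med n) Preorder.toLE v (single j) :=
      Finset.singleton_subset_iff.2 hjv
    apply hnv (single j) hle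
    exact (force_bigOrOn _ α I).2 ⟨j, hJI (hv hjv), (hsing j j).2 rfl⟩
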